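/- arXiv:2605.11156 — 2 statements merged into one kernel-verified Lean document; each statement's English description precedes it below -/
import Mathlib

section
/- In the polynomial ring k[z, w, u, v, u', v'] over a field k, the two elements u·z − u'·w and v·z − v'·w form a regular sequence. -/
open MvPolynomial

section Aux

variable (k : Type*) [Field k]

lemma aux_X_not_dvd_X {n : ℕ} {i j : Fin n} (h : i ≠ j) :
    ¬ (X i : MvPolynomial (Fin n) k) ∣ X j := by
  rintro ⟨c, hc⟩
  have := congrArg (aeval (fun t : Fin n => if t = i then 0 else X t : Fin n → MvPolynomial (Fin n) k)) hc
  simp [h, Ne.symm h] at this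
  

lemma aux_prime_X {n : ℕ} (i : Fin (n + 1)) :
    Prime (X i : MvPolynomial (Fin (n + 1)) k) := by
  have h0 : Prime (X 0 : MvPolynomial (Fin (n + 1)) k) := by
    have hp : Prime (Polynomial.X : Polynomial (MvPolynomial (Fin n) k)) := Polynomial.prime_X
    have := (MulEquiv.prime_iff (finSuccEquiv k n).toMulEquiv
      (p := (X 0 : MvPolynomial (Fin (n + 1)) k))).mp
    apply this
    simpa [finSuccEquiv_X_zero] using hp
  have := (MulEquiv.prime_iff (renameEquiv k (Equiv.swap (0 : Fin (n + 1)) i)).toMulEquiv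
    (p := (X 0 : MvPolynomial (Fin (n + 1)) k))).mpr h0
  simpa [Equiv.swap_apply_left] using this

end Aux

section Aux2
variable (k : Type*) [Field k]

local notation "R5" => MvPolynomial (Fin 5) k

lemma aux_prime_poly :
    Prime (Polynomial.C (X 1 : R5) * Polynomial.X - Polynomial.C (X 3 * X 0)) := by
  set a : R5 := X 1 with ha
  set b : R5 := X 3 * X 0 with hb
  set p : Polynomial R5 := Polynomial.C a * Polynomial.X - Polynomial.C b with hp
  have ha0 : a ≠ 0 := X_ne_zero 1
  have hpform : p = Polynomial.C a * Polynomial.X + Polynomial.C (-b) := by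
    rw [hp, map_neg]; ring
  have hdeg : p.natDegree = 1 := by
    rw [hpform]; exact Polynomial.natDegree_linear ha0
  have hcoeff1 : p.coeff 1 = a := by
    simp [hp, Polynomial.coeff_sub, Polynomial.coeff_C]
  have hcoeff0 : p.coeff 0 = -b := by
    simp [hp, Polynomial.coeff_sub, Polynomial.coeff_C]
  have hconst : ∀ s : R5, Polynomial.C s ∣ p → IsUnit s := by
    intro s hs
    have hdvd := (Polynomial.C_dvd_iff_dvd_coeff s p).mp hs
    have h1 : s ∣ a := hcoeff1 ▸ hdvd 1
    have h0 : s ∣ b := (dvd_neg).mp (hcoeff0 ▸ hdvd 0)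
    have hXa : Prime a := aux_prime_X k 1
    obtain ⟨c, hc⟩ := h1
    rcases hXa.irreducible.isUnit_or_isUnit hc with hu | hu
    · exact hu
    · exfalso
      have has : a ∣ s := by
        obtain ⟨cu, rfl⟩ := hu
        exact ⟨↑cu⁻¹, by rw [hc, mul_assoc, Units.mul_inv, mul_one]⟩
      have hadvd : a ∣ b := has.trans h0
      rcases hXa.2.2 _ _ (hb ▸ hadvd) with h | h
      · exact aux_X_not_dvd_X k (by decide : (1 : Fin 5) ≠ 3) h
      · exact aux_X_not_dvd_X k (by decide : (1 : Fin 5) ≠ 0) h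
  have hirr : Irreducible p := by
    constructor
    · intro hu
      have := Polynomial.natDegree_eq_zero_of_isUnit hu
      omega
    · intro q r hqr
      have hp0 : p ≠ 0 := by
        intro h0; rw [h0] at hdeg; simp at hdeg
      have hq0 : q ≠ 0 := fun h => hp0 (by rw [hqr, h, zero_mul])
      have hr0 : r ≠ 0 := fun h => hp0 (by rw [hqr, h, mul_zero])
      have hsum : q.natDegree + r.natDegree = 1 := by
        rw [← Polynomial.natDegree_mul hq0 hr0, ← hqr, hdeg]
      rcases Nat.eq_zero_or_pos q.natDegree with h | h
      · left
        rw [Polynomial.eq_C_of_natDegree_eq_zero h]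
        exact Polynomial.isUnit_C.mpr (hconst _ ⟨r, by rw [← Polynomial.eq_C_of_natDegree_eq_zero h, ← hqr]⟩)
      · right
        have : r.natDegree = 0 := by omega
        rw [Polynomial.eq_C_of_natDegree_eq_zero this]
        exact Polynomial.isUnit_C.mpr (hconst _ ⟨q, by rw [← Polynomial.eq_C_of_natDegree_eq_zero this, hqr, mul_comm]⟩)
  exact (UniqueFactorizationMonoid.irreducible_iff_prime).mp hirr

end Aux2

section Aux3
variable (k : Type*) [Field k]

lemma aux_prime_a :
    Prime ((X 2 * X 0 - X 4 * X 1 : MvPolynomial (Fin 6) k)) := by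
  have hP := aux_prime_poly k
  let e := (renameEquiv k (Equiv.swap (0 : Fin 6) 2)).trans (finSuccEquiv k 5)
  apply (MulEquiv.prime_iff e.toMulEquiv).mp
  have e0 : e (X 0 : MvPolynomial (Fin 6) k) = Polynomial.C (X 1) := by
    simp only [e, AlgEquiv.trans_apply, renameEquiv_apply, rename_X,
      Equiv.swap_apply_left]
    rw [show (2 : Fin 6) = Fin.succ 1 from rfl, finSuccEquiv_X_succ]
  have e2 : e (X 2 : MvPolynomial (Fin 6) k) = Polynomial.X := by
    simp only [e, AlgEquiv.trans_apply, renameEquiv_apply, rename_X,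
      Equiv.swap_apply_right]
    exact finSuccEquiv_X_zero
  have e4 : e (X 4 : MvPolynomial (Fin 6) k) = Polynomial.C (X 3) := by
    simp only [e, AlgEquiv.trans_apply, renameEquiv_apply, rename_X,
      show (Equiv.swap (0 : Fin 6) 2) 4 = 4 from by decide]
    rw [show (4 : Fin 6) = Fin.succ 3 from rfl, finSuccEquiv_X_succ]
  have e1 : e (X 1 : MvPolynomial (Fin 6) k) = Polynomial.C (X 0) := by
    simp only [e, AlgEquiv.trans_apply, renameEquiv_apply, rename_X,
      show (Equiv.swap (0 : Fin 6) 2) 1 = 1 from by decide]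
    rw [show (1 : Fin 6) = Fin.succ 0 from rfl, finSuccEquiv_X_succ]
  have : e.toMulEquiv (X 2 * X 0 - X 4 * X 1 : MvPolynomial (Fin 6) k)
      = Polynomial.C (X 1) * Polynomial.X - Polynomial.C (X 3 * X 0) := by
    show e (X 2 * X 0 - X 4 * X 1 : MvPolynomial (Fin 6) k) = _
    rw [map_sub, map_mul, map_mul, e0, e2, e4, e1, ← Polynomial.C_mul, mul_comm]
  rw [this]
  exact hP

end Aux3

/-- In `k[z, w, u, v, u', v']` (variables indexed `0,…,5` as
`z, w, u, v, u', v'`), the elements `u·z − u'·w` and `v·z − v'·w` form a regular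
sequence: the first is a nonzerodivisor, and the second is a nonzerodivisor
modulo the ideal generated by the first. -/
theorem regular_sequence_in_sixvar_polynomial_ring (k : Type*) [Field k] :
    (∀ x : MvPolynomial (Fin 6) k,
      (X 2 * X 0 - X 4 * X 1) * x = 0 → x = 0) ∧
    (∀ x : MvPolynomial (Fin 6) k,
      (X 3 * X 0 - X 5 * X 1) * x ∈
          Ideal.span ({X 2 * X 0 - X 4 * X 1} : Set (MvPolynomial (Fin 6) k)) →
        x ∈ Ideal.span ({X 2 * X 0 - X 4 * X 1} : Set (MvPolynomial (Fin 6) k))) := by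
  have ha : Prime ((X 2 * X 0 - X 4 * X 1 : MvPolynomial (Fin 6) k)) := aux_prime_a k
  constructor
  · intro x hx
    rcases mul_eq_zero.mp hx with h | h
    · exact absurd h ha.ne_zero
    · exact h
  · intro x hx
    rw [Ideal.mem_span_singleton] at hx ⊢
    have hnb : ¬ (X 2 * X 0 - X 4 * X 1 : MvPolynomial (Fin 6) k) ∣ (X 3 * X 0 - X 5 * X 1) := by
      intro hd
      have := map_dvd (aeval
        (![X 0, X 1, 0, X 3, 0, 0] : Fin 6 → MvPolynomial (Fin 6) k)) hd
      simp only [map_sub, map_mul, aeval_X, Matrix.cons_val_zero, Matrix.cons_val_one,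
        Matrix.head_cons, Matrix.cons_val_two, Matrix.tail_cons, Matrix.cons_val_three,
        Matrix.cons_val_four,
        show (![X 0, X 1, 0, X 3, 0, 0] : Fin 6 → MvPolynomial (Fin 6) k) 5 = 0 from rfl] at this
      simp only [zero_mul, mul_zero, sub_zero, zero_sub, sub_self, zero_dvd_iff] at this
      exact mul_ne_zero (X_ne_zero 3) (X_ne_zero 0) this
    rcases ha.2.2 _ _ hx with h | h
    · exact absurd h hnb
    · exact h
end

section
/- In the polynomial ring k[x, y, z, w] over a field k, the element x·y − z·w is prime (equivalently, irreducible), so the quotient k[x, y, z, w]/(x·y − z·w) is an integral domain. -/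
open MvPolynomial

private lemma prime_X0 (k : Type*) [Field k] : Prime (X 0 : MvPolynomial (Fin 3) k) := by
  let e := (MvPolynomial.finSuccEquiv k 2).toRingEquiv.toMulEquiv
  rw [← MulEquiv.prime_iff e]
  have : e (X 0) = Polynomial.X := MvPolynomial.finSuccEquiv_X_zero
  rw [this]
  exact Polynomial.prime_X

private lemma X0_not_dvd (k : Type*) [Field k] :
    ¬ (X 0 : MvPolynomial (Fin 3) k) ∣ X 1 * X 2 := by
  intro h
  let e := (MvPolynomial.finSuccEquiv k 2).toRingEquiv
  have h2 : (e (X 0) : Polynomial (MvPolynomial (Fin 2) k)) ∣ e (X 1 * X 2) :=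
    map_dvd e.toRingHom h
  have e0 : e (X 0) = Polynomial.X := MvPolynomial.finSuccEquiv_X_zero
  have e1 : e (X 1) = Polynomial.C (X 0) := by
    have : (1 : Fin 3) = Fin.succ 0 := rfl
    rw [this]; exact MvPolynomial.finSuccEquiv_X_succ
  have e2 : e (X 2) = Polynomial.C (X 1) := by
    have : (2 : Fin 3) = Fin.succ 1 := rfl
    rw [this]; exact MvPolynomial.finSuccEquiv_X_succ
  rw [map_mul, e0, e1, e2, ← Polynomial.C_mul, Polynomial.X_dvd_iff,
    Polynomial.coeff_C] at h2
  simp only [if_pos rfl] at h2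
  exact (mul_ne_zero (MvPolynomial.X_ne_zero 0) (MvPolynomial.X_ne_zero 1)) h2

private lemma q_prime (k : Type*) [Field k] :
    Prime (Polynomial.C (X 0) * Polynomial.X - Polynomial.C (X 1 * X 2) :
      Polynomial (MvPolynomial (Fin 3) k)) := by
  set R := MvPolynomial (Fin 3) k with hR
  set q : Polynomial R := Polynomial.C (X 0) * Polynomial.X - Polynomial.C (X 1 * X 2) with hq
  have hc1 : q.coeff 1 = X 0 := by simp [hq]
  have hc0 : q.coeff 0 = -(X 1 * X 2) := by simp [hq]
  have hprim : q.IsPrimitive := by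
    intro r hr
    rw [Polynomial.C_dvd_iff_dvd_coeff] at hr
    have h1 : r ∣ X 0 := hc1 ▸ hr 1
    have h0 : r ∣ X 1 * X 2 := by
      have := hc0 ▸ hr 0
      exact (dvd_neg).mp this
    obtain ⟨s, hs⟩ := h1
    rcases (prime_X0 k).irreducible.isUnit_or_isUnit hs with hu | hu
    · exact hu
    · exfalso
      apply X0_not_dvd k
      have hX : (X 0 : R) ∣ r := by
        refine ⟨(hu.unit⁻¹ : Rˣ), ?_⟩
        rw [hs]
        rw [mul_assoc, IsUnit.mul_val_inv, mul_one]
      exact hX.trans h0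
  have hinj : Function.Injective (algebraMap R (FractionRing R)) :=
    IsFractionRing.injective _ _
  have hirr : Irreducible q := by
    apply hprim.irreducible_of_irreducible_map_of_injective hinj
    apply Polynomial.irreducible_of_degree_eq_one
    rw [hq]
    rw [Polynomial.map_sub, Polynomial.map_mul, Polynomial.map_C, Polynomial.map_X,
      Polynomial.map_C, sub_eq_add_neg, ← Polynomial.C_neg]
    exact Polynomial.degree_linear (by
      simpa using (map_ne_zero_iff _ hinj).mpr (MvPolynomial.X_ne_zero 0))
  exact (UniqueFactorizationMonoid.irreducible_iff_prime).mp hirr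

/-- In `k[x, y, z, w]`, the element `x·y − z·w` is prime, so the
quotient `k[x, y, z, w]/(x·y − z·w)` is an integral domain. -/
theorem xy_sub_zw_prime (k : Type*) [Field k] :
    Prime ((X 0 * X 1 - X 2 * X 3 : MvPolynomial (Fin 4) k)) ∧
    IsDomain (MvPolynomial (Fin 4) k ⧸
      Ideal.span ({X 0 * X 1 - X 2 * X 3} : Set (MvPolynomial (Fin 4) k))) := by
  let e := (MvPolynomial.finSuccEquiv k 3).toRingEquiv
  have e0 : e (X 0) = Polynomial.X := MvPolynomial.finSuccEquiv_X_zero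
  have e1 : e (X 1) = Polynomial.C (X 0) := by
    have : (1 : Fin 4) = Fin.succ 0 := rfl
    rw [this]; exact MvPolynomial.finSuccEquiv_X_succ
  have e2 : e (X 2) = Polynomial.C (X 1) := by
    have : (2 : Fin 4) = Fin.succ 1 := rfl
    rw [this]; exact MvPolynomial.finSuccEquiv_X_succ
  have e3 : e (X 3) = Polynomial.C (X 2) := by
    have : (3 : Fin 4) = Fin.succ 2 := rfl
    rw [this]; exact MvPolynomial.finSuccEquiv_X_succ
  have hmap : e (X 0 * X 1 - X 2 * X 3) =
      Polynomial.C (X 0) * Polynomial.X - Polynomial.C (X 1 * X 2) := by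
    rw [map_sub, map_mul, map_mul, e0, e1, e2, e3, ← Polynomial.C_mul]
    ring
  have hp : Prime ((X 0 * X 1 - X 2 * X 3 : MvPolynomial (Fin 4) k)) := by
    rw [← MulEquiv.prime_iff e.toMulEquiv]
    show Prime (e _)
    rw [hmap]
    exact q_prime k
  refine ⟨hp, ?_⟩
  haveI : (Ideal.span ({X 0 * X 1 - X 2 * X 3} : Set (MvPolynomial (Fin 4) k))).IsPrime :=
    (Ideal.span_singleton_prime hp.ne_zero).mpr hp
  exact Ideal.Quotient.isDomain _
end
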